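/- The Day extension of a partial operation is residuated in each variable: for each j there is a functor R^j_θ such that for all copresheaves F₁,…,Fₙ, G there is an isomorphism Hom(θ_D(F₁,…,Fₙ), G) ≅ Hom(Fⱼ, R^j_θ(G, F₁,…,F̂ⱼ,…,Fₙ)), natural in Fⱼ and G. Equivalently, the functor Fⱼ ↦ θ_D(F₁,…,Fⱼ,…,Fₙ) has a right adjoint for every choice of the other arguments. -/

import Mathlib

open CategoryTheory Opposite

universe u v

namespace DayPaper

variable {B C : Type} [SmallCategory B] [SmallCategory C]

/-- A point of the coend defining the Day extension (left Kan extension) of a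
copresheaf `P` along `θ`, at `c`. -/
structure DayPt (θ : B ⥤ C) (P : B ⥤ Type) (c : C) : Type where
  pt : B
  elt : P.obj pt
  arr : θ.obj pt ⟶ c

/-- The relation generating the coend quotient. -/
def DayRel (θ : B ⥤ C) (P : B ⥤ Type) (c : C) : DayPt θ P c → DayPt θ P c → Prop :=
  fun x y => ∃ f : x.pt ⟶ y.pt, P.map f x.elt = y.elt ∧ x.arr = θ.map f ≫ y.arr

/-- The coend `∫^{b} P(b) × Hom(θ b, c)`. -/
def DayObj (θ : B ⥤ C) (P : B ⥤ Type) (c : C) : Type := Quot (DayRel θ P c)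

/-- The Day extension of a copresheaf `P` along `θ`, as a copresheaf on `C`. -/
def DayCopresheaf (θ : B ⥤ C) (P : B ⥤ Type) : C ⥤ Type where
  obj c := DayObj θ P c
  map {c c'} g := TypeCat.ofHom (Quot.map (fun x => (⟨x.pt, x.elt, x.arr ≫ g⟩ : DayPt θ P c'))
    (by rintro x y ⟨f, h1, h2⟩; exact ⟨f, h1, by dsimp; rw [h2, Category.assoc]⟩))
  map_id c := by
    ext q
    induction q using Quot.ind with
    | _ x => exact congrArg (Quot.mk _) (by rcases x with ⟨b, p, a⟩; simp)
  map_comp {c c' c''} g g' := by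
    ext q
    induction q using Quot.ind with
    | _ x => exact congrArg (Quot.mk _) (by rcases x with ⟨b, p, a⟩; simp)

/-- The Day extension, as a functor on copresheaf categories. -/
def DayExtGen (θ : B ⥤ C) : (B ⥤ Type) ⥤ (C ⥤ Type) where
  obj P := DayCopresheaf θ P
  map {P Q} η :=
    { app := fun c => TypeCat.ofHom (Quot.map
          (fun x => (⟨x.pt, η.app x.pt x.elt, x.arr⟩ : DayPt θ Q c))
        (by
          rintro x y ⟨f, h1, h2⟩
          exact ⟨f, by dsimp; rw [← h1, FunctorToTypes.naturality], h2⟩))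
      naturality := by
        intro c c' g
        ext q
        induction q using Quot.ind with
        | _ x => rfl }
  map_id P := by
    ext c q
    induction q using Quot.ind with
    | _ x => rfl
  map_comp {P Q R} η η' := by
    ext c q
    induction q using Quot.ind with
    | _ x => rfl

variable {ι : Type}

/-- The external product of a family of copresheaves. -/
def extProd (F : ι → (C ⥤ Type)) : (ι → C) ⥤ Type where
  obj x := ∀ i, (F i).obj (x i)
  map f := TypeCat.ofHom fun p => fun i => (F i).map (f i) (p i)
  map_id x := by ext p; simp
  map_comp f g := by ext p; simp

/-- The external product, as a functor. -/
def extProdFunctor (ι : Type) (C : Type) [SmallCategory C] :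
    (ι → (C ⥤ Type)) ⥤ ((ι → C) ⥤ Type) where
  obj := extProd
  map {F G} α :=
    { app := fun x => TypeCat.ofHom fun p => fun i => (α i).app (x i) (p i)
      naturality := by
        intro x y f
        ext p
        funext i
        first
          | exact NatTrans.naturality_apply (α i) (f i) (p i)
          | exact (NatTrans.naturality_apply (α i) (f i) (p i)).symm }
  map_id F := by ext x p; rfl
  map_comp α β := by ext x p; rfl

/-- Reindexing of pi-categories along a map of index types. -/
def reindexPi {A : Type u} [Category.{v} A] {ι' ι : Type} (h : ι' → ι) :
    (ι → A) ⥤ (ι' → A) where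
  obj x := fun i' => x (h i')
  map f := fun i' => f (h i')
  map_id _x := rfl
  map_comp _f _g := rfl

/-- The tuple `(θ₁, …, θₙ)` of a family of multi-ary operations. -/
def tupleFunctor {κ : ι → Type} (θs : ∀ i, (κ i → C) ⥤ C) :
    ((Σ i, κ i) → C) ⥤ (ι → C) where
  obj x := fun i => (θs i).obj (fun s => x ⟨i, s⟩)
  map f := fun i => (θs i).map (fun s => f ⟨i, s⟩)
  map_id x := by funext i; exact (θs i).map_id _
  map_comp f g := by funext i; exact (θs i).map_comp _ _

/-- Multi-composition of multi-ary operations on `C`. -/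
def mc {κ : ι → Type} (θ : (ι → C) ⥤ C) (θs : ∀ i, (κ i → C) ⥤ C) :
    ((Σ i, κ i) → C) ⥤ C :=
  tupleFunctor θs ⋙ θ

/-- The Day extension of a (total) `ι`-ary operation. -/
def DayExtFunctor (θ : (ι → C) ⥤ C) : (ι → (C ⥤ Type)) ⥤ (C ⥤ Type) :=
  extProdFunctor ι C ⋙ DayExtGen θ

end DayPaper

open DayPaper CategoryTheory

namespace DayPaper

variable {C : Type} [SmallCategory C] {ι : Type}

/-- The Day extension of a partial `ι`-ary operation `θ : D ⥤ C` whose domain is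
a full subcategory `i : D ↪ C^ι`: it sends a family of copresheaves `F` to the
double coend `a ↦ ∫^{d ∈ D} ∫^{c ∈ C^ι} Hom_C(θ d, a) × Hom(c, i d) × ∏ᵢ Fᵢ(cᵢ)`. -/
def pday {Dm : Type} [SmallCategory Dm] (θ : Dm ⥤ C) (i : Dm ⥤ (ι → C)) :
    (ι → (C ⥤ Type)) ⥤ (C ⥤ Type) :=
  extProdFunctor ι C ⋙ DayExtGen (𝟭 (ι → C)) ⋙
    (Functor.whiskeringLeft Dm (ι → C) Type).obj i ⋙ DayExtGen θ

/-- The tuple `(θ₁, …, θₙ)` of a family of partial operations, as a functor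
from the product of the domains to `C^ι`. -/
def tupleP {Dk : ι → Type} [∀ j, SmallCategory (Dk j)]
    (θs : ∀ j, Dk j ⥤ C) : (∀ j, Dk j) ⥤ (ι → C) where
  obj x := fun j => (θs j).obj (x j)
  map f := fun j => (θs j).map (f j)
  map_id x := by funext j; exact (θs j).map_id _
  map_comp f g := by funext j; exact (θs j).map_comp _ _

/-- The inclusion of the product of the domains of a family of partial
operations into `C^{Σ κ}`. -/
def sigmaIncl {κ : ι → Type} {Dk : ι → Type} [∀ j, SmallCategory (Dk j)]
    (is : ∀ j, Dk j ⥤ (κ j → C)) : (∀ j, Dk j) ⥤ ((Σ j, κ j) → C) where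
  obj x := fun p => (is p.1).obj (x p.1) p.2
  map f := fun p => (is p.1).map (f p.1) p.2
  map_id x := by funext p; exact congrFun ((is p.1).map_id (x p.1)) p.2
  map_comp f g := by funext p; exact congrFun ((is p.1).map_comp (f p.1) (g p.1)) p.2

end DayPaper

open DayPaper CategoryTheory

/-- The functor `[C ⥤ Type] ⥤ [C ⥤ Type]^ι` inserting its argument in the
`j`-th slot of the fixed family `F`. -/
def updFunctor {C : Type} [SmallCategory C] {ι : Type} [DecidableEq ι]
    (F : ι → (C ⥤ Type)) (j : ι) : (C ⥤ Type) ⥤ (ι → (C ⥤ Type)) :=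
  Functor.pi' fun i =>
    if i = j then 𝟭 (C ⥤ Type) else (Functor.const (C ⥤ Type)).obj (F i)

namespace DayResidual

open CategoryTheory

variable {C : Type} [SmallCategory C] {Dm : Type} [SmallCategory Dm]

/-- The Day extension along `θ` is left adjoint to restriction along `θ`. -/
def dayAdj (θ : Dm ⥤ C) : DayExtGen θ ⊣ (Functor.whiskeringLeft Dm C Type).obj θ :=
  Adjunction.mkOfHomEquiv
    { homEquiv := fun P G =>
        { toFun := fun α =>
            { app := fun d => TypeCat.ofHom fun p => α.app (θ.obj d) (Quot.mk _ ⟨d, p, 𝟙 _⟩)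
              naturality := by
                intro d d' e
                refine ConcreteCategory.hom_ext _ _ fun p => ?_
                have h := NatTrans.naturality_apply α (θ.map e) (Quot.mk _ ⟨d, p, 𝟙 _⟩)
                dsimp at h ⊢
                rw [← h]
                have hq : Quot.mk (DayRel θ P (θ.obj d')) ⟨d, p, 𝟙 _ ≫ θ.map e⟩
                    = Quot.mk (DayRel θ P (θ.obj d')) ⟨d', P.map e p, 𝟙 _⟩ :=
                  Quot.sound ⟨e, rfl, by simp⟩
                exact congrArg (α.app _) hq.symm }
          invFun := fun β =>
            { app := fun c => TypeCat.ofHom <| Quot.lift (fun (x : DayPt θ P c) => G.map x.arr (β.app x.pt x.elt))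
                (by
                  rintro x y ⟨f, h1, h2⟩
                  have hb := NatTrans.naturality_apply β f x.elt
                  dsimp at hb
                  dsimp
                  rw [h2, ← h1, hb, FunctorToTypes.map_comp_apply])
              naturality := by
                intro c c' g
                refine ConcreteCategory.hom_ext _ _ fun q => ?_
                induction q using Quot.ind with
                | _ x => exact FunctorToTypes.map_comp_apply G x.arr g _ }
          left_inv := by
            intro α
            apply NatTrans.ext
            funext c
            refine ConcreteCategory.hom_ext _ _ fun q => ?_
            induction q using Quot.ind with
            | _ x =>
              have h := NatTrans.naturality_apply α x.arr (Quot.mk _ ⟨x.pt, x.elt, 𝟙 _⟩)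
              refine h.symm.trans ?_
              have hq : Quot.mk (DayRel θ P c) ⟨x.pt, x.elt, 𝟙 _ ≫ x.arr⟩
                  = Quot.mk (DayRel θ P c) ⟨x.pt, x.elt, x.arr⟩ := by
                rw [Category.id_comp]
              exact congrArg (α.app c) hq
          right_inv := by
            intro β
            apply NatTrans.ext
            funext d
            refine ConcreteCategory.hom_ext _ _ fun p => ?_
            show G.map (𝟙 (θ.obj d)) (β.app d p) = β.app d p
            rw [FunctorToTypes.map_id_apply]
      }
      homEquiv_naturality_left_symm := by
        intro P' P G f g
        apply NatTrans.ext
        funext c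
        refine ConcreteCategory.hom_ext _ _ fun q => ?_
        induction q using Quot.ind with
        | _ x => rfl
      homEquiv_naturality_right := by
        intro P G G' f g
        apply NatTrans.ext
        funext d
        refine ConcreteCategory.hom_ext _ _ fun p => ?_
        rfl }

/-- Pointwise product with a fixed copresheaf `W`. -/
def tensorW (W : Dm ⥤ Type) : (Dm ⥤ Type) ⥤ (Dm ⥤ Type) where
  obj P :=
    { obj := fun d => W.obj d × P.obj d
      map := fun e => TypeCat.ofHom fun x => (W.map e x.1, P.map e x.2)
      map_id := by intro d; refine ConcreteCategory.hom_ext _ _ fun x => ?_; simp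
      map_comp := by intro _ _ _ e e'; refine ConcreteCategory.hom_ext _ _ fun x => ?_; simp }
  map {P Q} η :=
    { app := fun d => TypeCat.ofHom fun x => (x.1, η.app d x.2)
      naturality := by
        intro d d' e
        refine ConcreteCategory.hom_ext _ _ fun x => ?_
        dsimp
        rw [FunctorToTypes.naturality] }
  map_id P := by apply NatTrans.ext; funext d; refine ConcreteCategory.hom_ext _ _ fun x => ?_; rfl
  map_comp η η' := by apply NatTrans.ext; funext d; refine ConcreteCategory.hom_ext _ _ fun x => ?_; rfl

/-- Pointwise internal hom from a fixed copresheaf `W`. -/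
def homW (W : Dm ⥤ Type) : (Dm ⥤ Type) ⥤ (Dm ⥤ Type) where
  obj Q :=
    { obj := fun d => { v : ∀ d', (d ⟶ d') → W.obj d' → Q.obj d' //
          ∀ (d' d'' : Dm) (g : d ⟶ d') (e : d' ⟶ d'') (w : W.obj d'),
            v d'' (g ≫ e) (W.map e w) = Q.map e (v d' g w) }
      map := fun {d₁ d₂} e => TypeCat.ofHom fun v => ⟨fun d' g w => v.1 d' (e ≫ g) w, by
        intro d' d'' g e' w
        dsimp
        rw [← Category.assoc]
        exact v.2 _ _ _ _ _⟩
      map_id := by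
        intro d
        refine ConcreteCategory.hom_ext _ _ fun v => ?_
        apply Subtype.ext
        funext d' g w
        simp
      map_comp := by
        intro d₁ d₂ d₃ e e'
        refine ConcreteCategory.hom_ext _ _ fun v => ?_
        apply Subtype.ext
        funext d' g w
        simp }
  map {Q Q'} η :=
    { app := fun d => TypeCat.ofHom fun v => ⟨fun d' g w => η.app d' (v.1 d' g w), by
        intro d' d'' g e w
        dsimp
        rw [v.2 _ _ _ _ _, FunctorToTypes.naturality]⟩
      naturality := by
        intro d d' e
        refine ConcreteCategory.hom_ext _ _ fun v => ?_
        apply Subtype.ext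
        funext d'' g w
        rfl }
  map_id Q := by apply NatTrans.ext; funext d; refine ConcreteCategory.hom_ext _ _ fun v => ?_; apply Subtype.ext; rfl
  map_comp η η' := by apply NatTrans.ext; funext d; refine ConcreteCategory.hom_ext _ _ fun v => ?_; apply Subtype.ext; rfl

/-- `tensorW W` is left adjoint to `homW W`. -/
def tensorAdj (W : Dm ⥤ Type) : tensorW W ⊣ homW W :=
  Adjunction.mkOfHomEquiv
    { homEquiv := fun P Q =>
        { toFun := fun α =>
            { app := fun d => TypeCat.ofHom fun p => ⟨fun d' g w => α.app d' (w, P.map g p), by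
                intro d' d'' g e w
                have h := NatTrans.naturality_apply α e (show ((tensorW W).obj P).obj d' from (w, P.map g p))
                dsimp at h ⊢
                rw [← h, FunctorToTypes.map_comp_apply]
                rfl⟩
              naturality := by
                intro d d' e
                refine ConcreteCategory.hom_ext _ _ fun p => ?_
                apply Subtype.ext
                funext d'' g w
                show α.app d'' (w, P.map g (P.map e p)) = α.app d'' (w, P.map (e ≫ g) p)
                rw [FunctorToTypes.map_comp_apply] }
          invFun := fun β =>
            { app := fun d => TypeCat.ofHom fun x => (β.app d x.2).1 d (𝟙 d) x.1
              naturality := by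
                intro d d' e
                refine ConcreteCategory.hom_ext _ _ fun x => ?_
                obtain ⟨w, p⟩ := x
                have hb := NatTrans.naturality_apply β e p
                have h2 := (β.app d p).2 d d' (𝟙 d) e w
                rw [Category.id_comp] at h2
                show (β.app d' (P.map e p)).1 d' (𝟙 d') (W.map e w)
                  = Q.map e ((β.app d p).1 d (𝟙 d) w)
                rw [hb]
                show (β.app d p).1 d' (e ≫ 𝟙 d') (W.map e w) = _
                rw [Category.comp_id]
                exact h2 }
          left_inv := by
            intro α
            apply NatTrans.ext
            funext d
            refine ConcreteCategory.hom_ext _ _ fun x => ?_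
            show α.app d (x.1, P.map (𝟙 d) x.2) = α.app d x
            rw [FunctorToTypes.map_id_apply]
            rfl
          right_inv := by
            intro β
            apply NatTrans.ext
            funext d
            refine ConcreteCategory.hom_ext _ _ fun p => ?_
            apply Subtype.ext
            funext d' g w
            have hb := NatTrans.naturality_apply β g p
            show (β.app d' (P.map g p)).1 d' (𝟙 d') w = (β.app d p).1 d' g w
            rw [hb]
            show (β.app d p).1 d' (g ≫ 𝟙 d') w = (β.app d p).1 d' g w
            rw [Category.comp_id] }
      homEquiv_naturality_left_symm := by
        intro P' P Q f g
        apply NatTrans.ext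
        funext d
        refine ConcreteCategory.hom_ext _ _ fun x => ?_
        rfl
      homEquiv_naturality_right := by
        intro P Q Q' f g
        apply NatTrans.ext
        funext d
        refine ConcreteCategory.hom_ext _ _ fun p => ?_
        apply Subtype.ext
        rfl }

section Slots

variable {n : ℕ} (F : Fin n → (C ⥤ Type)) (j : Fin n)

/-- Transport an element of a copresheaf along an equality of functors. -/
def tr {P Q : C ⥤ Type} (e : P = Q) (c : C) (t : P.obj c) : Q.obj c :=
  cast (congrArg (fun R : C ⥤ Type => R.obj c) e) t

lemma tr_natural {P Q : C ⥤ Type} (e : P = Q) {c c' : C} (g : c ⟶ c') (t : P.obj c) :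
    tr e c' (P.map g t) = Q.map g (tr e c t) := by subst e; rfl

lemma tr_symm_tr {P Q : C ⥤ Type} (e : P = Q) (c : C) (t : P.obj c) :
    tr e.symm c (tr e c t) = t := by subst e; rfl

lemma tr_tr_symm {P Q : C ⥤ Type} (e : P = Q) (c : C) (t : Q.obj c) :
    tr e c (tr e.symm c t) = t := by subst e; rfl

lemma slotEqJ (X : C ⥤ Type) : ((updFunctor F j).obj X) j = X := by
  show (if j = j then 𝟭 (C ⥤ Type) else (Functor.const (C ⥤ Type)).obj (F j)).obj X = X
  rw [if_pos rfl]
  rfl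

lemma slotEqNe (X : C ⥤ Type) {k : Fin n} (hk : k ≠ j) :
    ((updFunctor F j).obj X) k = F k := by
  show (if k = j then 𝟭 (C ⥤ Type) else (Functor.const (C ⥤ Type)).obj (F k)).obj X = F k
  rw [if_neg hk]
  rfl

lemma gen_map_j (Φ : (C ⥤ Type) ⥤ (C ⥤ Type)) (h : Φ = 𝟭 (C ⥤ Type))
    {X Y : C ⥤ Type} (η : X ⟶ Y) (eX : Φ.obj X = X) (eY : Φ.obj Y = Y)
    (c : C) (t : (Φ.obj X).obj c) :
    tr eY c ((Φ.map η).app c t) = η.app c (tr eX c t) := by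
  subst h; rfl

lemma gen_map_ne (Φ : (C ⥤ Type) ⥤ (C ⥤ Type)) (Z : C ⥤ Type)
    (h : Φ = (Functor.const (C ⥤ Type)).obj Z)
    {X Y : C ⥤ Type} (η : X ⟶ Y) (eX : Φ.obj X = Z) (eY : Φ.obj Y = Z)
    (c : C) (t : (Φ.obj X).obj c) :
    tr eY c ((Φ.map η).app c t) = tr eX c t := by
  subst h; rfl

lemma updMap_j {X Y : C ⥤ Type} (η : X ⟶ Y) (c : C) (t : (((updFunctor F j).obj X) j).obj c) :
    tr (slotEqJ F j Y) c (((updFunctor F j).map η j).app c t)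
      = η.app c (tr (slotEqJ F j X) c t) :=
  gen_map_j _ (if_pos rfl) η _ _ c t

lemma updMap_ne {X Y : C ⥤ Type} (η : X ⟶ Y) {k : Fin n} (hk : k ≠ j)
    (c : C) (t : (((updFunctor F j).obj X) k).obj c) :
    tr (slotEqNe F j Y hk) c (((updFunctor F j).map η k).app c t)
      = tr (slotEqNe F j X hk) c t :=
  gen_map_ne _ (F k) (if_neg hk) η _ _ c t

variable (I : Dm ⥤ (Fin n → C))

/-- The fixed "all slots except `j`" parameter copresheaf on the domain. -/
def Wres : Dm ⥤ Type where
  obj d := ∀ k, k ≠ j → (F k).obj (I.obj d k)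
  map {d d'} e := TypeCat.ofHom fun w => fun k hk => (F k).map (I.map e k) (w k hk)
  map_id d := by
    refine ConcreteCategory.hom_ext _ _ fun w => ?_
    funext k hk
    show (F k).map (I.map (𝟙 d) k) (w k hk) = w k hk
    rw [I.map_id]
    exact FunctorToTypes.map_id_apply (F k) _
  map_comp {d d' d''} e e' := by
    refine ConcreteCategory.hom_ext _ _ fun w => ?_
    funext k hk
    show (F k).map (I.map (e ≫ e') k) (w k hk)
      = (F k).map (I.map e' k) ((F k).map (I.map e k) (w k hk))
    rw [I.map_comp]
    exact FunctorToTypes.map_comp_apply (F k) _ _ _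

/-- The model functor: restriction along `d ↦ (i d)ⱼ` followed by the pointwise
product with the fixed parameters. -/
def modelF : (C ⥤ Type) ⥤ (Dm ⥤ Type) :=
  (Functor.whiskeringLeft Dm C Type).obj (I ⋙ Pi.eval (fun _ : Fin n => C) j) ⋙ tensorW (Wres F j I)

/-- The relevant part of the Day extension of the partial operation. -/
def AFun : (C ⥤ Type) ⥤ (Dm ⥤ Type) :=
  updFunctor F j ⋙ extProdFunctor (Fin n) C ⋙ DayExtGen (𝟭 (Fin n → C)) ⋙
    (Functor.whiskeringLeft Dm (Fin n → C) Type).obj I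

/-- Combine a `j`-slot element and the parameters into a point of the external product. -/
def pack (X : C ⥤ Type) (d : Dm) (w : ∀ k, k ≠ j → (F k).obj (I.obj d k))
    (ξ : X.obj (I.obj d j)) (k : Fin n) : (((updFunctor F j).obj X) k).obj (I.obj d k) :=
  if hk : k = j then
    cast (by rw [hk]) (tr (slotEqJ F j X).symm (I.obj d j) ξ)
  else tr (slotEqNe F j X hk).symm _ (w k hk)

lemma pack_j (X : C ⥤ Type) (d : Dm) (w : ∀ k, k ≠ j → (F k).obj (I.obj d k))
    (ξ : X.obj (I.obj d j)) :
    pack F j I X d w ξ j = tr (slotEqJ F j X).symm (I.obj d j) ξ := by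
  unfold pack
  rw [dif_pos rfl]
  rfl

lemma pack_ne (X : C ⥤ Type) (d : Dm) (w : ∀ k, k ≠ j → (F k).obj (I.obj d k))
    (ξ : X.obj (I.obj d j)) {k : Fin n} (hk : k ≠ j) :
    pack F j I X d w ξ k = tr (slotEqNe F j X hk).symm _ (w k hk) := by
  unfold pack
  rw [dif_neg hk]

/-- From the Day coend to the model. -/
def toModelApp (X : C ⥤ Type) (d : Dm) :
    ((AFun F j I).obj X).obj d → ((modelF F j I).obj X).obj d :=
  Quot.lift
    (fun x => (fun k hk => (F k).map (x.arr k) (tr (slotEqNe F j X hk) _ (x.elt k)),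
      X.map (x.arr j) (tr (slotEqJ F j X) _ (x.elt j))))
    (by
      rintro x y ⟨f, h1, h2⟩
      have helt : ∀ k, y.elt k = (((updFunctor F j).obj X) k).map (f k) (x.elt k) :=
        fun k => (congrFun h1 k).symm
      have harr : ∀ k, x.arr k = f k ≫ y.arr k := fun k => congrFun h2 k
      refine Prod.ext (funext fun k => funext fun hk => ?_) ?_
      · show (F k).map (x.arr k) (tr (slotEqNe F j X hk) _ (x.elt k))
            = (F k).map (y.arr k) (tr (slotEqNe F j X hk) _ (y.elt k))
        rw [harr k, helt k, tr_natural, FunctorToTypes.map_comp_apply]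
        rfl
      · show X.map (x.arr j) (tr (slotEqJ F j X) _ (x.elt j))
            = X.map (y.arr j) (tr (slotEqJ F j X) _ (y.elt j))
        rw [harr j, helt j, tr_natural, FunctorToTypes.map_comp_apply]
        rfl)

/-- From the model to the Day coend. -/
def fromModelApp (X : C ⥤ Type) (d : Dm) :
    ((modelF F j I).obj X).obj d → ((AFun F j I).obj X).obj d :=
  fun z => Quot.mk _ ⟨I.obj d, pack F j I X d z.1 z.2, 𝟙 _⟩

lemma pack_elt (X : C ⥤ Type) (d : Dm)
    (x : DayPt (𝟭 (Fin n → C)) (extProd ((updFunctor F j).obj X)) (I.obj d)) :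
    pack F j I X d
        (fun k hk => (F k).map (x.arr k) (tr (slotEqNe F j X hk) _ (x.elt k)))
        (X.map (x.arr j) (tr (slotEqJ F j X) _ (x.elt j)))
      = fun k => (((updFunctor F j).obj X) k).map (x.arr k) (x.elt k) := by
  funext k
  by_cases hk : k = j
  · subst hk
    rw [pack_j, ← tr_natural, tr_symm_tr]
  · rw [pack_ne F j I X d _ _ hk, ← tr_natural, tr_symm_tr]

lemma toModel_fromModel (X : C ⥤ Type) (d : Dm) (q : ((AFun F j I).obj X).obj d) :
    fromModelApp F j I X d (toModelApp F j I X d q) = q := by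
  induction q using Quot.ind with
  | _ x =>
    refine (Quot.sound ⟨x.arr, ?_, by simp⟩).symm
    exact (pack_elt F j I X d x).symm

lemma fromModel_toModel (X : C ⥤ Type) (d : Dm) (z : ((modelF F j I).obj X).obj d) :
    toModelApp F j I X d (fromModelApp F j I X d z) = z := by
  refine Prod.ext (funext fun k => funext fun hk => ?_) ?_
  · show (F k).map (𝟙 _) (tr (slotEqNe F j X hk) _ (pack F j I X d z.1 z.2 k)) = z.1 k hk
    erw [pack_ne F j I X d _ _ hk, tr_tr_symm, FunctorToTypes.map_id_apply]
  · show X.map (𝟙 _) (tr (slotEqJ F j X) _ (pack F j I X d z.1 z.2 j)) = z.2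
    erw [pack_j, tr_tr_symm, FunctorToTypes.map_id_apply]

/-- The comparison isomorphism between the Day-coend functor and the model functor. -/
def bigIso : AFun F j I ≅ modelF F j I :=
  NatIso.ofComponents
    (fun X => NatIso.ofComponents
      (fun d =>
        { hom := TypeCat.ofHom (toModelApp F j I X d)
          inv := TypeCat.ofHom (fromModelApp F j I X d)
          hom_inv_id := by ext q; exact toModel_fromModel F j I X d q
          inv_hom_id := by ext z; exact fromModel_toModel F j I X d z })
      (by
        intro d d' e
        refine ConcreteCategory.hom_ext _ _ fun q => ?_
        induction q using Quot.ind with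
        | _ x =>
          refine Prod.ext (funext fun k => funext fun hk => ?_) ?_
          · show (F k).map ((x.arr ≫ I.map e) k) (tr (slotEqNe F j X hk) _ (x.elt k))
              = (F k).map (I.map e k) ((F k).map (x.arr k) (tr (slotEqNe F j X hk) _ (x.elt k)))
            rw [← FunctorToTypes.map_comp_apply]
            rfl
          · show X.map ((x.arr ≫ I.map e) j) (tr (slotEqJ F j X) _ (x.elt j))
              = X.map (I.map e j) (X.map (x.arr j) (tr (slotEqJ F j X) _ (x.elt j)))
            rw [← FunctorToTypes.map_comp_apply]
            rfl))
    (by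
      intro X Y η
      apply NatTrans.ext
      funext d
      refine ConcreteCategory.hom_ext _ _ fun q => ?_
      induction q using Quot.ind with
      | _ x =>
        refine Prod.ext (funext fun k => funext fun hk => ?_) ?_
        · show (F k).map (x.arr k)
              (tr (slotEqNe F j Y hk) _ ((((updFunctor F j).map η) k).app _ (x.elt k)))
            = (F k).map (x.arr k) (tr (slotEqNe F j X hk) _ (x.elt k))
          rw [updMap_ne F j η hk]
        · show Y.map (x.arr j)
              (tr (slotEqJ F j Y) _ ((((updFunctor F j).map η) j).app _ (x.elt j)))
            = η.app _ (X.map (x.arr j) (tr (slotEqJ F j X) _ (x.elt j)))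
          rw [updMap_j, FunctorToTypes.naturality])

end Slots

end DayResidual


/-- The Day extension of a partial operation is residuated in each variable:
for every `j` and every choice of the other arguments, the functor
`Fⱼ ↦ θ_D(F₁,…,Fⱼ,…,Fₙ)` has a right adjoint. -/
theorem dayExtension_partial_residuated (C : Type) [SmallCategory C]
    (n : ℕ) (Dm : Type) [SmallCategory Dm] (i : Dm ⥤ (Fin n → C))
    [i.Full] [i.Faithful] (θ : Dm ⥤ C) (F : Fin n → (C ⥤ Type)) (j : Fin n) :
    (updFunctor F j ⋙ pday θ i).IsLeftAdjoint := by
  exact (Adjunction.ofNatIsoLeft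
    ((((i ⋙ Pi.eval (fun _ : Fin n => C) j).ranAdjunction Type).comp
        (DayResidual.tensorAdj (DayResidual.Wres F j i))).comp (DayResidual.dayAdj θ))
    (Functor.isoWhiskerRight (DayResidual.bigIso F j i).symm (DayExtGen θ))).isLeftAdjoint
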